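/- arXiv:1110.4542 — 3 statements merged into one kernel-verified Lean document; each statement's English description precedes it below -/
import Mathlib

section
/- Let (F, G, ∂) be a quasi-abelian crossed module of groups. Then the inclusion Z(G) ↪ G induces a group isomorphism Z(G)/∂(Z(F)) ≅ G/∂(F); that is, the cokernel of the restricted homomorphism ∂_Z : Z(F) → Z(G) is isomorphic, via the map induced by the inclusion Z(G) ↪ G, to the cokernel of ∂. (Here ∂(F) is a normal subgroup of G and ∂(Z(F)) is a subgroup of Z(G), so both quotients are groups.) -/
/-- Let `(F, G, ∂)` be a quasi-abelian crossed module of groups: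
(i) the center of `G` acts trivially on `F`; (ii) `G = ∂(F) · Z(G)`; (iii) every element
of the center of the subgroup `∂(F)` is the image under `∂` of an element of `Z(F)`.
Then the inclusion `Z(G) ↪ G` induces a group isomorphism
`Z(G) ⧸ ∂(Z(F)) ≃* G ⧸ ∂(F)`, i.e. the cokernel of the restricted map
`∂_Z : Z(F) → Z(G)` is isomorphic, via the map induced by the inclusion `Z(G) ↪ G`,
to the cokernel of `∂`.  (Here `∂(Z(F))` is regarded as a subgroup of `Z(G)` by taking
the preimage under the inclusion `Z(G) ↪ G` of the image `∂(Z(F)) ⊆ Z(G)`; `∂(F)` is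
normal in `G`, and subgroups of the commutative group `Z(G)` are normal, so both
quotients are groups.) -/
theorem quasiAbelian_coker_center_mulEquiv_coker {F G : Type*} [Group F] [Group G]
    [MulDistribMulAction G F] (d : F →* G)
    (hpeiffer1 : ∀ (g : G) (f : F), d (g • f) = g * d f * g⁻¹)
    (hpeiffer2 : ∀ f f' : F, d f • f' = f * f' * f⁻¹)
    (hqa1 : ∀ z ∈ Subgroup.center G, ∀ f : F, z • f = f)
    (hqa2 : ∀ g : G, ∃ f : F, ∃ z ∈ Subgroup.center G, g = d f * z)
    (hqa3 : ∀ x : G, x ∈ d.range → (∀ y ∈ d.range, Commute x y) →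
      ∃ f ∈ Subgroup.center F, d f = x) :
    haveI : d.range.Normal :=
      ⟨fun n hn g => by obtain ⟨f, rfl⟩ := hn; exact ⟨g • f, hpeiffer1 g f⟩⟩
    ∃ e : (Subgroup.center G ⧸
        Subgroup.comap (Subgroup.center G).subtype ((Subgroup.center F).map d)) ≃*
          G ⧸ d.range,
      ∀ z : Subgroup.center G, e (QuotientGroup.mk z) = QuotientGroup.mk (z : G) := by
  haveI : d.range.Normal :=
    ⟨fun n hn g => by obtain ⟨f, rfl⟩ := hn; exact ⟨g • f, hpeiffer1 g f⟩⟩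
  set φ : Subgroup.center G →* G ⧸ d.range :=
    (QuotientGroup.mk' d.range).comp (Subgroup.center G).subtype with hφ
  have hker : φ.ker =
      Subgroup.comap (Subgroup.center G).subtype ((Subgroup.center F).map d) := by
    ext z
    constructor
    · intro hz
      have hz' : (z : G) ∈ d.range := by
        have := (QuotientGroup.eq_one_iff (z : G)).mp hz
        exact this
      obtain ⟨f, hf, hdf⟩ := hqa3 (z : G) hz' (fun y _ =>
        (Subgroup.mem_center_iff.mp z.2 y).symm)
      exact ⟨f, hf, hdf⟩
    · rintro ⟨f, hf, hdf⟩
      show QuotientGroup.mk (z : G) = 1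
      exact (QuotientGroup.eq_one_iff _).mpr ⟨f, hdf⟩
  have hsurj : Function.Surjective φ := by
    intro q
    induction q using QuotientGroup.induction_on with
    | H g =>
      obtain ⟨f, z, hz, rfl⟩ := hqa2 g
      refine ⟨⟨z, hz⟩, ?_⟩
      show QuotientGroup.mk z = QuotientGroup.mk (d f * z)
      refine QuotientGroup.eq.mpr ?_
      exact ⟨f, by rw [Subgroup.mem_center_iff.mp hz (d f)]; group⟩
  refine ⟨(QuotientGroup.quotientMulEquivOfEq hker.symm).trans
    (QuotientGroup.quotientKerEquivOfSurjective φ hsurj), fun z => ?_⟩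
  rfl
end

section
/- Let (F, G, ∂) be a quasi-abelian crossed module of groups. Then the homomorphism F → ∂(F)/Z(∂(F)) induced by ∂ (where Z(∂(F)), the center of the subgroup ∂(F), is normal in ∂(F)) is surjective with kernel equal to Z(F); consequently ∂ induces a group isomorphism F/Z(F) ≅ ∂(F)/Z(∂(F)). -/
/-- Let `(F, G, ∂)` be a quasi-abelian crossed module of groups:
(i) the center of `G` acts trivially on `F`; (ii) `G = ∂(F) · Z(G)`; (iii) every element
of the center of the subgroup `∂(F)` is the image under `∂` of an element of `Z(F)`.
Then the homomorphism `F → ∂(F) ⧸ Z(∂(F))` induced by `∂` (the center `Z(∂(F))` of the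
subgroup `∂(F)` being normal in `∂(F)`) is surjective with kernel equal to `Z(F)`;
consequently `∂` induces a group isomorphism `F ⧸ Z(F) ≃* ∂(F) ⧸ Z(∂(F))`. -/
theorem quasiAbelian_inn_mulEquiv_inn_range {F G : Type*} [Group F] [Group G]
    [MulDistribMulAction G F] (d : F →* G)
    (hpeiffer1 : ∀ (g : G) (f : F), d (g • f) = g * d f * g⁻¹)
    (hpeiffer2 : ∀ f f' : F, d f • f' = f * f' * f⁻¹)
    (hqa1 : ∀ z ∈ Subgroup.center G, ∀ f : F, z • f = f)
    (hqa2 : ∀ g : G, ∃ f : F, ∃ z ∈ Subgroup.center G, g = d f * z)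
    (hqa3 : ∀ x : G, x ∈ d.range → (∀ y ∈ d.range, Commute x y) →
      ∃ f ∈ Subgroup.center F, d f = x) :
    Function.Surjective
      ((QuotientGroup.mk' (Subgroup.center d.range)).comp d.rangeRestrict) ∧
    ((QuotientGroup.mk' (Subgroup.center d.range)).comp d.rangeRestrict).ker =
      Subgroup.center F ∧
    ∃ e : (F ⧸ Subgroup.center F) ≃* (d.range ⧸ Subgroup.center d.range),
      ∀ f : F, e (QuotientGroup.mk f) =
        ((QuotientGroup.mk' (Subgroup.center d.range)).comp d.rangeRestrict) f := by
  set φ := (QuotientGroup.mk' (Subgroup.center d.range)).comp d.rangeRestrict with hφ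
  -- ker d ≤ Z(F)
  have hkerd : ∀ k : F, d k = 1 → k ∈ Subgroup.center F := by
    intro k hk
    rw [Subgroup.mem_center_iff]
    intro f'
    have h := hpeiffer2 k f'
    rw [hk, one_smul] at h
    calc f' * k = (k * f' * k⁻¹) * k := by rw [← h]
    _ = k * f' := by group
  -- central elements map to central elements of the range
  have hcent : ∀ f ∈ Subgroup.center F, ∀ y ∈ d.range, Commute (d f) y := by
    intro f hf y hy
    obtain ⟨f', rfl⟩ := hy
    have h1 := hpeiffer2 f f'
    have hf' := (Subgroup.mem_center_iff.mp hf) f'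
    rw [show f * f' * f⁻¹ = f' by rw [← hf']; group] at h1
    have h2 := hpeiffer1 (d f) f'
    rw [h1] at h2
    show d f * d f' = d f' * d f
    calc d f * d f' = (d f * d f' * (d f)⁻¹) * d f := by group
    _ = d f' * d f := by rw [← h2]
  have hsurj : Function.Surjective φ := by
    intro q
    obtain ⟨⟨y, f, rfl⟩, rfl⟩ := QuotientGroup.mk'_surjective _ q
    exact ⟨f, rfl⟩
  have hker : φ.ker = Subgroup.center F := by
    ext f
    simp only [hφ, MonoidHom.mem_ker, MonoidHom.comp_apply, QuotientGroup.mk'_apply,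
      QuotientGroup.eq_one_iff]
    constructor
    · intro hf
      have hc : ∀ y ∈ d.range, Commute (d f) y := by
        intro y hy
        have h := congrArg Subtype.val ((Subgroup.mem_center_iff.mp hf) ⟨y, hy⟩)
        exact h.symm
      obtain ⟨f₀, hf₀, hdf₀⟩ := hqa3 (d f) ⟨f, rfl⟩ hc
      have hk : d (f₀⁻¹ * f) = 1 := by
        rw [map_mul, map_inv, hdf₀]
        group
      have := mul_mem hf₀ (hkerd _ hk)
      simpa using this
    · intro hf
      rw [Subgroup.mem_center_iff]
      rintro ⟨y, f', rfl⟩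
      exact Subtype.ext (hcent f hf (d f') ⟨f', rfl⟩).symm.eq
  refine ⟨hsurj, hker, ?_⟩
  refine ⟨(QuotientGroup.quotientMulEquivOfEq hker.symm).trans
    (QuotientGroup.quotientKerEquivOfSurjective φ hsurj), fun f => rfl⟩
end

section
/- Let (F, G, ∂) be a quasi-abelian crossed module of groups. Then the homomorphism F → G/Z(G) sending f to the coset ∂(f)·Z(G) is surjective with kernel equal to Z(F); consequently ∂ induces a group isomorphism F/Z(F) ≅ G/Z(G), i.e., an isomorphism Inn(F) ≅ Inn(G). -/
/-- Let `(F, G, ∂)` be a quasi-abelian crossed module of groups: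
(i) the center of `G` acts trivially on `F`; (ii) `G = ∂(F) · Z(G)`; (iii) every element
of the center of the subgroup `∂(F)` is the image under `∂` of an element of `Z(F)`.
Then the homomorphism `F → G ⧸ Z(G)`, `f ↦ ∂(f)·Z(G)`, is surjective with kernel equal
to `Z(F)`; consequently `∂` induces a group isomorphism
`F ⧸ Z(F) ≃* G ⧸ Z(G)`, i.e. an isomorphism `Inn(F) ≃* Inn(G)`. -/
theorem quasiAbelian_inn_mulEquiv_inn {F G : Type*} [Group F] [Group G]
    [MulDistribMulAction G F] (d : F →* G)
    (hpeiffer1 : ∀ (g : G) (f : F), d (g • f) = g * d f * g⁻¹)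
    (hpeiffer2 : ∀ f f' : F, d f • f' = f * f' * f⁻¹)
    (hqa1 : ∀ z ∈ Subgroup.center G, ∀ f : F, z • f = f)
    (hqa2 : ∀ g : G, ∃ f : F, ∃ z ∈ Subgroup.center G, g = d f * z)
    (hqa3 : ∀ x : G, x ∈ d.range → (∀ y ∈ d.range, Commute x y) →
      ∃ f ∈ Subgroup.center F, d f = x) :
    Function.Surjective ((QuotientGroup.mk' (Subgroup.center G)).comp d) ∧
    ((QuotientGroup.mk' (Subgroup.center G)).comp d).ker = Subgroup.center F ∧
    ∃ e : (F ⧸ Subgroup.center F) ≃* (G ⧸ Subgroup.center G),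
      ∀ f : F, e (QuotientGroup.mk f) = QuotientGroup.mk (d f) := by
  set φ := (QuotientGroup.mk' (Subgroup.center G)).comp d with hφ
  -- kernel of d is central in F
  have hkerd : ∀ k : F, d k = 1 → k ∈ Subgroup.center F := by
    intro k hk
    rw [Subgroup.mem_center_iff]
    intro f'
    have := hpeiffer2 k f'
    rw [hk, one_smul] at this
    calc f' * k = (k * f' * k⁻¹) * k := by rw [← this]
      _ = k * f' := by group
  -- surjectivity
  have hsurj : Function.Surjective φ := by
    intro g
    obtain ⟨g, rfl⟩ := QuotientGroup.mk'_surjective (Subgroup.center G) g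
    obtain ⟨f, z, hz, hg⟩ := hqa2 g
    refine ⟨f, ?_⟩
    have hz1 : ((z : G) : G ⧸ Subgroup.center G) = 1 := (QuotientGroup.eq_one_iff z).mpr hz
    simp only [hφ, MonoidHom.comp_apply, QuotientGroup.mk'_apply, hg,
      QuotientGroup.mk_mul, hz1, mul_one]
  have hker : φ.ker = Subgroup.center F := by
    ext f
    simp only [hφ, MonoidHom.mem_ker, MonoidHom.comp_apply, QuotientGroup.mk'_apply,
      QuotientGroup.eq_one_iff]
    constructor
    · intro hdf
      -- d f ∈ Z(G); use hqa3 to find f₀ ∈ Z(F) with d f₀ = d f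
      obtain ⟨f₀, hf₀, hdf₀⟩ := hqa3 (d f) ⟨f, rfl⟩ (fun y _ => (Subgroup.mem_center_iff.mp hdf y).symm)
      have hk : d (f * f₀⁻¹) = 1 := by
        rw [map_mul, map_inv, hdf₀, mul_inv_cancel]
      have := hkerd _ hk
      have : f = (f * f₀⁻¹) * f₀ := by group
      rw [this]
      exact Subgroup.mul_mem _ (hkerd _ hk) hf₀
    · intro hf
      rw [Subgroup.mem_center_iff]
      intro g
      obtain ⟨f', z, hz, hg⟩ := hqa2 g
      have hcomm : d f' * d f = d f * d f' := by
        have h1 : f * f' * f⁻¹ = f' := by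
          rw [Subgroup.mem_center_iff] at hf
          rw [← hf f', mul_inv_cancel_right]
        have := hpeiffer1 (d f) f'
        rw [hpeiffer2, h1] at this
        have : d f * d f' * (d f)⁻¹ = d f' := this.symm
        calc d f' * d f = (d f * d f' * (d f)⁻¹) * d f := by rw [this]
          _ = d f * d f' := by group
      have hzc := Subgroup.mem_center_iff.mp hz
      rw [hg]
      calc d f' * z * d f = d f' * d f * z := by rw [mul_assoc, ← hzc (d f), ← mul_assoc]
        _ = d f * d f' * z := by rw [hcomm]
        _ = d f * (d f' * z) := by rw [mul_assoc]
  refine ⟨hsurj, hker, ?_⟩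
  refine ⟨(QuotientGroup.quotientMulEquivOfEq hker.symm).trans
    (QuotientGroup.quotientKerEquivOfSurjective φ hsurj), fun f => ?_⟩
  rfl
end
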